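/- Let R and S be rings and suppose S^op ≅ End_R(P) for a finitely generated projective generator P of left R-modules, with R flat over Z. Then for every prime p, the Morita equivalence between R/pR and S/pS induces an isomorphism of centers Z(R/pR) ≅ Z(S/pS) that preserves the mod-p-reduction Poisson brackets. -/

import Mathlib

/-- The reduction `R/pR` of a ring `R` modulo a prime `p`, realized as the quotient of `R`
by the two-sided ideal generated by `p`. -/
abbrev RedModP (R : Type) [Ring R] (p : ℕ) : Type :=
  RingQuot (fun a b : R => a = (p : R) ∧ b = 0)

/-- The quotient map `R → R/pR`. -/
noncomputable def RedModP.mk (R : Type) [Ring R] (p : ℕ) : R →+* RedModP R p :=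
  RingQuot.mkRingHom _

section Aux

variable {A : Type} [Ring A] {p : ℕ}

/-- The congruence "equal mod p". -/
def pCon (A : Type) [Ring A] (p : ℕ) : RingCon A where
  r a b := ∃ c, a = b + (p : A) * c
  iseqv := ⟨fun a => ⟨0, by noncomm_ring⟩,
    fun {a b} ⟨c, h⟩ => ⟨-c, by rw [h]; noncomm_ring⟩,
    fun {a b c} ⟨d, h⟩ ⟨e, h2⟩ => ⟨e + d, by rw [h, h2]; noncomm_ring⟩⟩
  mul' := fun {a b c d} h1 h2 => by
    obtain ⟨u, hu⟩ := h1
    obtain ⟨v, hv⟩ := h2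
    refine ⟨b * v + u * d + u * ((p:A) * v), ?_⟩
    rw [hu, hv]
    have hcomm : ∀ x : A, (p : A) * x = x * (p : A) := fun x => (Nat.cast_commute p x).eq
    calc (b + (p:A) * u) * (d + (p:A) * v)
        = b * d + (b * (p:A)) * v + (p:A) * (u * d) + (p:A) * (u * ((p:A) * v)) := by noncomm_ring
      _ = b * d + ((p:A) * b) * v + (p:A) * (u * d) + (p:A) * (u * ((p:A) * v)) := by
          rw [hcomm b]
      _ = b * d + (p:A) * (b * v + u * d + u * ((p:A) * v)) := by noncomm_ring
  add' := fun {a b c d} h1 h2 => by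
    obtain ⟨u, hu⟩ := h1
    obtain ⟨v, hv⟩ := h2
    exact ⟨u + v, by rw [hu, hv]; noncomm_ring⟩

theorem pCon_iff (a b : A) : pCon A p a b ↔ ∃ c, a = b + (p : A) * c := by exact Iff.rfl

theorem redMk_eq_iff (x y : A) :
    RedModP.mk A p x = RedModP.mk A p y ↔ ∃ c, x = y + (p : A) * c := by
  constructor
  · intro h
    have hfac : ∀ ⦃a b : A⦄, (a = (p : A) ∧ b = 0) → (pCon A p).mk' a = (pCon A p).mk' b := by
      rintro a b ⟨rfl, rfl⟩
      exact (RingCon.eq _).2 ((pCon_iff _ _).2 ⟨1, by noncomm_ring⟩)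
    have := congrArg (RingQuot.lift ⟨(pCon A p).mk', hfac⟩) h
    rw [RedModP.mk, RingQuot.lift_mkRingHom_apply, RingQuot.lift_mkRingHom_apply] at this
    exact (pCon_iff _ _).1 ((RingCon.eq _).1 this)
  · rintro ⟨c, rfl⟩
    have hp : RedModP.mk A p (p : A) = 0 := by
      have := RingQuot.mkRingHom_rel (r := fun a b : A => a = (p : A) ∧ b = 0)
        (x := (p : A)) (y := 0) ⟨rfl, rfl⟩
      simpa [RedModP.mk] using this
    rw [map_add, map_mul, hp, zero_mul, add_zero]

theorem redMk_eq_zero_iff (x : A) :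
    RedModP.mk A p x = 0 ↔ ∃ c, x = (p : A) * c := by
  rw [show (0 : RedModP A p) = RedModP.mk A p 0 from (map_zero _).symm]
  simp only [redMk_eq_iff, zero_add]

theorem mem_center_iff' (z : A) :
    RedModP.mk A p z ∈ Subring.center (RedModP A p) ↔
      ∀ r : A, ∃ c, z * r - r * z = (p : A) * c := by
  rw [Subring.mem_center_iff]
  constructor
  · intro h r
    have := h (RedModP.mk A p r)
    rw [← map_mul, ← map_mul] at this
    obtain ⟨c, hc⟩ := (redMk_eq_iff _ _).1 this.symm
    exact ⟨c, by rw [hc]; noncomm_ring⟩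
  · intro h g
    obtain ⟨r, rfl⟩ := RingQuot.mkRingHom_surjective _ g
    obtain ⟨c, hc⟩ := h r
    rw [show (RingQuot.mkRingHom _ : A →+* RedModP A p) = RedModP.mk A p from rfl,
      ← map_mul, ← map_mul]
    exact (redMk_eq_iff _ _).2 ⟨-c, by rw [mul_neg, ← hc]; noncomm_ring⟩

/-- Flatness over ℤ gives torsion-freeness. -/
theorem flat_nsmul_inj (M : Type) [AddCommGroup M] [Module ℤ M] [Module.Flat ℤ M]
    {k : ℕ} (hk : k ≠ 0) : Function.Injective (fun x : M => k • x) := by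
  intro a b hab
  obtain rfl : ‹Module ℤ M› = AddCommGroup.toIntModule M := Subsingleton.elim _ _
  have hinj : Function.Injective (LinearMap.lsmul ℤ ℤ (k : ℤ)) := by
    intro x y hxy
    simpa using mul_left_cancel₀ (by exact_mod_cast hk : (k:ℤ) ≠ 0) hxy
  have h2 := Module.Flat.lTensor_preserves_injective_linearMap
    (M := M) (LinearMap.lsmul ℤ ℤ (k : ℤ)) hinj
  have key : ∀ x : M, (LinearMap.lTensor M (LinearMap.lsmul ℤ ℤ (k : ℤ)))
      ((TensorProduct.rid ℤ M).symm x) = (TensorProduct.rid ℤ M).symm (k • x) := by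
    intro x
    rw [TensorProduct.rid_symm_apply, TensorProduct.rid_symm_apply, LinearMap.lTensor_tmul]
    rw [← Nat.cast_smul_eq_nsmul ℤ k x, TensorProduct.smul_tmul]
    simp
  have h5 : (LinearMap.lTensor M (LinearMap.lsmul ℤ ℤ (k : ℤ)))
      ((TensorProduct.rid ℤ M).symm a) = (LinearMap.lTensor M (LinearMap.lsmul ℤ ℤ (k : ℤ)))
      ((TensorProduct.rid ℤ M).symm b) := by
    rw [key a, key b]
    exact congrArg _ hab
  exact (TensorProduct.rid ℤ M).symm.injective (h2 h5)

end Aux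


section Mod

variable {R : Type} [Ring R] {p : ℕ}
variable {P : Type} [AddCommGroup P] [Module R P]

/-- Right multiplication by `z`, an `R`-linear endomorphism of `Fin n → R`. -/
def rmul (n : ℕ) (z : R) : Module.End R (Fin n → R) where
  toFun x := fun i => x i * z
  map_add' x y := by funext i; simp [add_mul]
  map_smul' r x := by funext i; simp [mul_assoc]

@[simp] theorem rmul_apply (n : ℕ) (z : R) (x : Fin n → R) (i : Fin n) :
    rmul n z x i = x i * z := rfl

theorem rmul_comp (n : ℕ) (z w : R) :
    (rmul n z) ∘ₗ (rmul n w) = rmul n (w * z) := by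
  ext x
  simp [mul_assoc]

/-- Division by p for linear maps, given torsion-freeness of the target. -/
theorem divP {M N : Type} [AddCommGroup M] [AddCommGroup N] [Module R M] [Module R N]
    (tf : Function.Injective (fun x : N => p • x)) (D : M →ₗ[R] N)
    (h : ∀ x, ∃ y, D x = p • y) : ∃ D' : M →ₗ[R] N, D = p • D' := by
  choose y hy using h
  have hadd : ∀ a b, y (a + b) = y a + y b := by
    intro a b
    apply tf
    simp only
    rw [← hy, map_add, hy, hy, smul_add]
  have hsmul : ∀ (r : R) (a : M), y (r • a) = r • y a := by
    intro r a
    apply tf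
    simp only
    rw [← hy, map_smul, hy, smul_comm]
  refine ⟨⟨⟨y, hadd⟩, hsmul⟩, ?_⟩
  ext x
  exact hy x

theorem tf_pi {n : ℕ} (tfR : Function.Injective (fun x : R => p • x)) :
    Function.Injective (fun x : Fin n → R => p • x) := by
  intro a b hab
  funext i
  exact tfR (congrFun hab i)

variable {n : ℕ} (f : (Fin n → R) →ₗ[R] P) (g : P →ₗ[R] (Fin n → R))

theorem tf_P (hfg : f ∘ₗ g = LinearMap.id) (tfR : Function.Injective (fun x : R => p • x)) :
    Function.Injective (fun x : P => p • x) := by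
  intro a b hab
  have : p • (g a) = p • (g b) := by rw [← map_nsmul, ← map_nsmul]; exact congrArg g hab
  have h2 := tf_pi (p := p) tfR this
  have := congrArg f h2
  rwa [show f (g a) = a from LinearMap.congr_fun hfg a,
    show f (g b) = b from LinearMap.congr_fun hfg b] at this

/-- Every vector decomposes along the standard basis. -/
theorem vec_decomp {M : Type} [AddCommGroup M] [Module R M] (B : (Fin n → R) →ₗ[R] M)
    (v : Fin n → R) : B v = ∑ j, v j • B (Pi.single j 1) := by
  have hv : v = ∑ j, v j • (Pi.single j (1:R) : Fin n → R) := by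
    funext i
    rw [Finset.sum_apply]
    simp only [Pi.smul_apply, smul_eq_mul]
    rw [Finset.sum_eq_single i]
    · simp
    · intro b _ hb
      rw [Pi.single_eq_of_ne' hb]; simp
    · simp
  conv_lhs => rw [hv]
  rw [map_sum]
  simp only [map_smul]

/-- `rmul z` commutes with every endomorphism mod `p`, when `z` is central mod `p`. -/
theorem rmul_central (tfR : Function.Injective (fun x : R => p • x))
    {z : R} (hz : ∀ r, ∃ c, z * r - r * z = (p : R) * c)
    (B : Module.End R (Fin n → R)) :
    ∃ D : Module.End R (Fin n → R), (rmul n z) ∘ₗ B - B ∘ₗ (rmul n z) = p • D := by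
  apply divP (tf_pi tfR)
  intro x
  choose c hc using fun j i => hz (B (Pi.single j 1) i)
  refine ⟨fun i => ∑ j, x j * (-(c j i)), ?_⟩
  funext i
  simp only [LinearMap.sub_apply, LinearMap.comp_apply, Pi.sub_apply, rmul_apply,
    Pi.smul_apply, smul_eq_mul]
  have h1 : B x i = ∑ j, x j * (B (Pi.single j 1) i) := by
    rw [vec_decomp B x]
    rw [Finset.sum_apply]
    simp
  have h2 : B (rmul n z x) i = ∑ j, (x j * z) * (B (Pi.single j 1) i) := by
    rw [vec_decomp B (rmul n z x)]
    rw [Finset.sum_apply]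
    simp
  rw [h1, h2, Finset.sum_mul, ← Finset.sum_sub_distrib]
  rw [nsmul_eq_mul, Finset.mul_sum]
  apply Finset.sum_congr rfl
  intro j _
  have hpc : ∀ y : R, y * ((p:R) * (- c j i)) = (p:R) * (y * (- c j i)) := by
    intro y
    rw [← mul_assoc, ← (Nat.cast_commute p y).eq, mul_assoc]
  calc x j * B (Pi.single j 1) i * z - x j * z * B (Pi.single j 1) i
      = x j * (B (Pi.single j 1) i * z - z * B (Pi.single j 1) i) := by noncomm_ring
    _ = x j * ((p:R) * (- c j i)) := by rw [show B (Pi.single j 1) i * z - z * B (Pi.single j 1) i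
          = (p:R) * (- c j i) from by rw [mul_neg, ← hc j i]; noncomm_ring]
    _ = (p:R) * (x j * (- c j i)) := hpc _

end Mod
section Sigma

variable {R : Type} [Ring R] {p : ℕ}
variable {P : Type} [AddCommGroup P] [Module R P]
variable {n : ℕ} (f : (Fin n → R) →ₗ[R] P) (g : P →ₗ[R] (Fin n → R))

/-- The endomorphism of `P` induced by right multiplication with `z`. -/
def sigma (z : R) : Module.End R P := f ∘ₗ ((rmul n z) ∘ₗ g)

theorem sigma_apply (z : R) (x : P) : sigma f g z x = f (rmul n z (g x)) := rfl

theorem sigma_add (z w : R) : sigma f g (z + w) = sigma f g z + sigma f g w := by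
  ext x
  simp only [sigma_apply, LinearMap.add_apply, ← map_add]
  congr 1
  funext i
  simp [mul_add]

theorem sigma_pmul (u : R) : sigma f g ((p : R) * u) = p • sigma f g u := by
  ext x
  show f (rmul n ((p:R) * u) (g x)) = p • (f (rmul n u (g x)))
  rw [← map_nsmul f]
  congr 1
  funext i
  simp only [rmul_apply, Pi.smul_apply, smul_eq_mul, nsmul_eq_mul]
  rw [← mul_assoc, ← (Nat.cast_commute p (g x i)).eq, mul_assoc]

theorem fg_id (hfg : f ∘ₗ g = LinearMap.id) (x : P) : f (g x) = x :=
  LinearMap.congr_fun hfg x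

theorem sigma_one (hfg : f ∘ₗ g = LinearMap.id) : sigma f g 1 = 1 := by
  ext x
  simp only [sigma_apply, Module.End.one_apply]
  rw [show rmul n 1 (g x) = g x from by funext i; simp]
  exact fg_id f g hfg x

/-- `sigma z` acts as left multiplication by `z`, mod `p`. -/
theorem sigma_smul (hfg : f ∘ₗ g = LinearMap.id)
    {z : R} (hz : ∀ r, ∃ c, z * r - r * z = (p : R) * c) (y : P) :
    ∃ q : P, sigma f g z y = z • y + p • q := by
  choose c hc using fun i => hz (g y i)
  refine ⟨f (fun i => -(c i)), ?_⟩
  rw [sigma_apply]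
  have hvec : rmul n z (g y) = z • (g y) + p • (fun i => -(c i) : Fin n → R) := by
    funext i
    simp only [rmul_apply, Pi.add_apply, Pi.smul_apply, smul_eq_mul]
    rw [nsmul_eq_mul, mul_neg, ← hc i]
    noncomm_ring
  rw [hvec, map_add, map_smul, map_nsmul, fg_id f g hfg]

/-- `sigma z` is central mod `p` in `End P`. -/
theorem sigma_central (hfg : f ∘ₗ g = LinearMap.id)
    (tfR : Function.Injective (fun x : R => p • x))
    {z : R} (hz : ∀ r, ∃ c, z * r - r * z = (p : R) * c) (b : Module.End R P) :
    ∃ c : Module.End R P, sigma f g z * b - b * sigma f g z = p • c := by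
  obtain ⟨D, hD⟩ := rmul_central tfR hz (g ∘ₗ (b ∘ₗ f))
  refine ⟨f ∘ₗ (D ∘ₗ g), ?_⟩
  ext x
  have h := LinearMap.congr_fun hD (g x)
  simp only [LinearMap.sub_apply, LinearMap.comp_apply, LinearMap.smul_apply] at h ⊢
  simp only [Module.End.mul_apply, sigma_apply]
  have h2 : rmul n z (g (b (f (g x)))) - g (b (f (rmul n z (g x)))) = p • D (g x) := h
  rw [fg_id f g hfg x] at h2
  have h3 := congrArg f h2
  rw [map_sub, map_nsmul, fg_id f g hfg] at h3
  exact h3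

/-- The fundamental product identity: `σ z ∘ σ w = σ (w * z)` mod `p²`. -/
theorem sigma_comp (hfg : f ∘ₗ g = LinearMap.id)
    (tfR : Function.Injective (fun x : R => p • x))
    {z w : R} (hz : ∀ r, ∃ c, z * r - r * z = (p : R) * c)
    (hw : ∀ r, ∃ c, w * r - r * w = (p : R) * c) :
    ∃ c : Module.End R P, sigma f g z * sigma f g w = sigma f g (w * z) + (p * p) • c := by
  obtain ⟨Dz, hDz⟩ := rmul_central tfR hz (g ∘ₗ f)
  obtain ⟨Dw, hDw⟩ := rmul_central tfR hw (g ∘ₗ f)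
  -- pointwise forms
  have he : ∀ v : Fin n → R, (g ∘ₗ f) v = g (f v) := fun v => rfl
  have heg : ∀ x : P, g (f (g x)) = g x := fun x => by rw [fg_id f g hfg]
  have hDzv : ∀ v, rmul n z ((g ∘ₗ f) v) - g (f (rmul n z v)) = p • Dz v := by
    intro v
    have := LinearMap.congr_fun hDz v
    simpa using this
  have hDwv : ∀ v, rmul n w ((g ∘ₗ f) v) - g (f (rmul n w v)) = p • Dw v := by
    intro v
    have := LinearMap.congr_fun hDw v
    simpa using this
  -- e ∘ Dw ∘ e = 0 pointwise on range of g: e (Dw (g x)) = 0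
  have hkill : ∀ x : P, g (f (Dw (g x))) = 0 := by
    intro x
    apply tf_pi (n := n) tfR
    show p • (g (f (Dw (g x)))) = p • (0 : Fin n → R)
    have h5 : p • Dw (g x) = rmul n w (g x) - g (f (rmul n w (g x))) := by
      have := hDwv (g x)
      simp only [LinearMap.comp_apply, heg] at this
      rw [← this]
    calc p • (g (f (Dw (g x))))
        = g (f (p • Dw (g x))) := by rw [map_nsmul, map_nsmul]
      _ = g (f (rmul n w (g x))) - g (f (g (f (rmul n w (g x))))) := by
          rw [h5, map_sub, map_sub]
      _ = p • (0 : Fin n → R) := by rw [heg (f (rmul n w (g x)))]; simp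
  refine ⟨f ∘ₗ (Dz ∘ₗ (Dw ∘ₗ g)), ?_⟩
  ext x
  simp only [Module.End.mul_apply, sigma_apply, LinearMap.add_apply, LinearMap.smul_apply,
    LinearMap.comp_apply]
  -- step 1 : g (f (rmul w (g x))) = rmul w (g x) - p • Dw (g x)
  have s1 : g (f (rmul n w (g x))) = rmul n w (g x) - p • Dw (g x) := by
    have := hDwv (g x); simp only [LinearMap.comp_apply, heg] at this
    rw [← this]; abel
  rw [s1, map_sub, map_nsmul]
  -- rmul z (rmul w v) = rmul (w*z)?? : rmul z ∘ rmul w = rmul (w * z)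
  have s2 : rmul n z (rmul n w (g x)) = rmul n (w * z) (g x) :=
    LinearMap.congr_fun (rmul_comp n z w) (g x)
  rw [s2]
  -- step 3 : f (rmul z (Dw (g x))) = - p • f (Dz (Dw (g x)))
  have s3 : f (rmul n z (Dw (g x))) = -(p • f (Dz (Dw (g x)))) := by
    have h4 := hDzv (Dw (g x))
    simp only [LinearMap.comp_apply, hkill x, map_zero] at h4
    -- h4 : rmul n z 0 - g (f (rmul n z (Dw (g x)))) = p • Dz (Dw (g x))
    rw [zero_sub] at h4
    have h6 := congrArg f (congrArg Neg.neg h4)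
    rw [neg_neg, map_neg, map_nsmul] at h6
    rw [show f (g (f (rmul n z (Dw (g x))))) = f (rmul n z (Dw (g x))) from
      fg_id f g hfg _] at h6
    rw [h6]
  rw [map_sub, map_nsmul, s3, smul_neg, sub_neg_eq_add, mul_smul]

end Sigma
section Theta

variable {R : Type} [Ring R] {p : ℕ}
variable {P : Type} [AddCommGroup P] [Module R P]
variable {m : ℕ} (F : (Fin m → P) →ₗ[R] R) (G : R →ₗ[R] (Fin m → P))

/-- The `i`-th coordinate functional `P →ₗ R` induced by `F`. -/
def rmap (i : Fin m) : P →ₗ[R] R := F ∘ₗ LinearMap.single R (fun _ => P) i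

theorem rmap_apply (i : Fin m) (x : P) : rmap F i x = F (Pi.single i x) := rfl

theorem F_sum (v : Fin m → P) : F v = ∑ i, rmap F i (v i) := by
  conv_lhs => rw [← Finset.univ_sum_single v]
  rw [map_sum]
  rfl

/-- The trace-like map back from `End P` to `R`. -/
def theta (a : Module.End R P) : R := ∑ i, rmap F i (a (G 1 i))

theorem theta_add (a b : Module.End R P) : theta F G (a + b) = theta F G a + theta F G b := by
  simp [theta, Finset.sum_add_distrib]

theorem theta_psmul (a : Module.End R P) : theta F G (p • a) = (p : R) * theta F G a := by
  rw [theta, theta]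
  have h : ∀ i : Fin m, rmap F i ((p • a) (G 1 i)) = p • rmap F i (a (G 1 i)) := by
    intro i
    rw [LinearMap.smul_apply, map_nsmul]
  rw [Finset.sum_congr rfl (fun i _ => h i), ← Finset.smul_sum, nsmul_eq_mul]

/-- multiplication operator by a functional's value: `w ↦ (rmap F i w) • x`. -/
def bmap (i : Fin m) (x : P) : Module.End R P where
  toFun w := rmap F i w • x
  map_add' w v := by simp [add_smul]
  map_smul' r w := by simp [mul_smul]

theorem bmap_apply (i : Fin m) (x w : P) : bmap F i x w = rmap F i w • x := rfl

variable (hFG : F ∘ₗ G = LinearMap.id)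

/-- `theta a` acts like `a` mod `p`. -/
theorem theta_vec (hFG : F ∘ₗ G = LinearMap.id) {a : Module.End R P}
    (ha : ∀ b : Module.End R P, ∃ c, a * b - b * a = p • c) (x : P) :
    ∃ q : P, (theta F G a) • x = a x + p • q := by
  choose c hc using fun i => ha (bmap F i x)
  refine ⟨∑ i, -(c i (G 1 i)), ?_⟩
  have h1 : (theta F G a) • x = ∑ i, bmap F i x (a (G 1 i)) := by
    rw [theta, Finset.sum_smul]
    rfl
  have hx : ∑ i, bmap F i x (G 1 i) = x := by
    have : ∑ i, bmap F i x (G 1 i) = (∑ i, rmap F i (G 1 i)) • x := by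
      rw [Finset.sum_smul]
      rfl
    rw [this, show ∑ i, rmap F i (G 1 i) = 1 from ?_, one_smul]
    rw [← F_sum]
    exact LinearMap.congr_fun hFG 1
  have h2 : a x = ∑ i, a (bmap F i x (G 1 i)) := by
    conv_lhs => rw [← hx]
    rw [map_sum]
  rw [h1, h2]
  have h3 : ∀ i : Fin m, bmap F i x (a (G 1 i)) =
      a (bmap F i x (G 1 i)) + p • (-(c i (G 1 i))) := by
    intro i
    have := LinearMap.congr_fun (hc i) (G 1 i)
    simp only [LinearMap.sub_apply, Module.End.mul_apply, LinearMap.smul_apply] at this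
    rw [smul_neg, ← this]
    abel
  rw [Finset.sum_congr rfl (fun i _ => h3 i), Finset.sum_add_distrib, ← Finset.smul_sum]

/-- `theta a` is central mod `p` in `R` when `a` is central mod `p` in `End P`. -/
theorem theta_central (hFG : F ∘ₗ G = LinearMap.id) {a : Module.End R P}
    (ha : ∀ b : Module.End R P, ∃ c, a * b - b * a = p • c) (r : R) :
    ∃ c : R, theta F G a * r - r * theta F G a = (p : R) * c := by
  choose q hq using theta_vec F G hFG ha
  refine ⟨∑ i, rmap F i (q (r • G 1 i)), ?_⟩
  have h1 : G r = r • G 1 := by rw [← map_smul, smul_eq_mul, mul_one]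
  have h2 : F (G r) = r := LinearMap.congr_fun hFG r
  have hr : r = ∑ i, rmap F i (r • G 1 i) := by
    conv_lhs => rw [← h2, F_sum, h1]
    exact Finset.sum_congr rfl (fun i _ => rfl)
  have step : ∀ i : Fin m, theta F G a * rmap F i (r • G 1 i)
      = r * rmap F i (a (G 1 i)) + (p : R) * rmap F i (q (r • G 1 i)) := by
    intro i
    have h3 : rmap F i (theta F G a • (r • G 1 i)) = theta F G a * rmap F i (r • G 1 i) := by
      simp only [map_smul, smul_eq_mul]
    calc theta F G a * rmap F i (r • G 1 i)
        = rmap F i (theta F G a • (r • G 1 i)) := h3.symm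
      _ = rmap F i (a (r • G 1 i)) + (p:R) * rmap F i (q (r • G 1 i)) := by
          rw [hq, map_add, map_nsmul, nsmul_eq_mul]
      _ = r * rmap F i (a (G 1 i)) + (p:R) * rmap F i (q (r • G 1 i)) := by
          rw [show a (r • G 1 i) = r • a (G 1 i) from map_smul a r (G 1 i), map_smul,
            smul_eq_mul]
  calc theta F G a * r - r * theta F G a
      = (∑ i, theta F G a * rmap F i (r • G 1 i)) - r * theta F G a := by
        nth_rewrite 1 [hr]
        rw [Finset.mul_sum]
    _ = (∑ i, (r * rmap F i (a (G 1 i)) + (p : R) * rmap F i (q (r • G 1 i))))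
          - r * theta F G a := by rw [Finset.sum_congr rfl (fun i _ => step i)]
    _ = (p : R) * ∑ i, rmap F i (q (r • G 1 i)) := by
        rw [Finset.sum_add_distrib, ← Finset.mul_sum, ← Finset.mul_sum, theta]
        abel

end Theta

section ThetaSigma

variable {R : Type} [Ring R] {p : ℕ}
variable {P : Type} [AddCommGroup P] [Module R P]
variable {n : ℕ} (f : (Fin n → R) →ₗ[R] P) (g : P →ₗ[R] (Fin n → R))
variable {m : ℕ} (F : (Fin m → P) →ₗ[R] R) (G : R →ₗ[R] (Fin m → P))

/-- `theta ∘ sigma = id` mod `p`. -/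
theorem theta_sigma (hfg : f ∘ₗ g = LinearMap.id) (hFG : F ∘ₗ G = LinearMap.id)
    {z : R} (hz : ∀ r, ∃ c, z * r - r * z = (p : R) * c) :
    ∃ c : R, theta F G (sigma f g z) = z + (p : R) * c := by
  choose q hq using sigma_smul f g hfg hz
  refine ⟨∑ i, rmap F i (q (G 1 i)), ?_⟩
  have hone : ∑ i, rmap F i (G 1 i) = 1 := by
    rw [← F_sum]
    exact LinearMap.congr_fun hFG 1
  calc theta F G (sigma f g z)
      = ∑ i, rmap F i (z • G 1 i + p • q (G 1 i)) := by
        rw [theta, Finset.sum_congr rfl (fun i _ => by rw [hq (G 1 i)])]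
    _ = ∑ i, (z * rmap F i (G 1 i) + (p:R) * rmap F i (q (G 1 i))) := by
        refine Finset.sum_congr rfl (fun i _ => ?_)
        rw [map_add, map_smul, map_nsmul, smul_eq_mul, nsmul_eq_mul]
    _ = z + (p : R) * ∑ i, rmap F i (q (G 1 i)) := by
        rw [Finset.sum_add_distrib, ← Finset.mul_sum, ← Finset.mul_sum, hone, mul_one]

/-- `sigma ∘ theta = id` mod `p`. -/
theorem sigma_theta (hfg : f ∘ₗ g = LinearMap.id) (hFG : F ∘ₗ G = LinearMap.id)
    (tfR : Function.Injective (fun x : R => p • x))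
    {a : Module.End R P} (ha : ∀ b : Module.End R P, ∃ c, a * b - b * a = p • c) :
    ∃ c : Module.End R P, sigma f g (theta F G a) = a + p • c := by
  have hz := theta_central F G hFG ha
  choose q1 hq1 using sigma_smul f g hfg hz
  choose q2 hq2 using theta_vec F G hFG ha
  have key : ∀ x : P, ∃ y : P, (sigma f g (theta F G a) - a) x = p • y := by
    intro x
    refine ⟨q1 x + q2 x, ?_⟩
    rw [LinearMap.sub_apply, hq1 x, hq2 x, smul_add]
    abel
  obtain ⟨c, hc⟩ := divP (tf_P f g hfg tfR) _ key
  exact ⟨c, by rw [← hc]; abel⟩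

end ThetaSigma
theorem redMk_eq_of_nsmul {A : Type} [Ring A] {p : ℕ} {x y c : A} (h : x = y + p • c) :
    RedModP.mk A p x = RedModP.mk A p y :=
  (redMk_eq_iff _ _).2 ⟨c, by rw [← nsmul_eq_mul]; exact h⟩

/-- Let `R`, `S` be rings, flat over `ℤ`, and suppose
`Sᵒᵖ ≅ End_R(P)` for a finitely generated projective generator `P` of left `R`-modules
(so `R` and `S` are Morita equivalent).  Then for every prime `p` there is an isomorphism
of centers `Z(R/pR) ≅ Z(S/pS)` preserving the mod-`p`-reduction Poisson brackets: if
central classes `z̄, w̄` (with lifts `z, w` in `R`) correspond to `z̄', w̄'` (with lifts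
`z', w'` in `S`), and `zw - wz = p·u`, `z'w' - w'z' = p·u'`, then the class of `u`
corresponds to the class of `u'`. -/
theorem statement19 (R S : Type) [Ring R] [Ring S]
    [Module.Flat ℤ R] [Module.Flat ℤ S]
    (P : Type) [AddCommGroup P] [Module R P]
    [Module.Projective R P] [Module.Finite R P]
    (hgen : ∃ (m : ℕ) (f : (Fin m → P) →ₗ[R] R), Function.Surjective f)
    (iso : Module.End R P ≃+* Sᵐᵒᵖ)
    (p : ℕ) (hp : p.Prime) :
    ∃ ψ : Subring.center (RedModP R p) ≃+* Subring.center (RedModP S p),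
      ∀ (z w u : R) (z' w' u' : S)
        (hz : RedModP.mk R p z ∈ Subring.center (RedModP R p))
        (hw : RedModP.mk R p w ∈ Subring.center (RedModP R p))
        (hu : RedModP.mk R p u ∈ Subring.center (RedModP R p))
        (hz' : RedModP.mk S p z' ∈ Subring.center (RedModP S p))
        (hw' : RedModP.mk S p w' ∈ Subring.center (RedModP S p))
        (hu' : RedModP.mk S p u' ∈ Subring.center (RedModP S p)),
        z * w - w * z = (p : R) * u →
        z' * w' - w' * z' = (p : S) * u' →
        ψ ⟨RedModP.mk R p z, hz⟩ = ⟨RedModP.mk S p z', hz'⟩ →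
        ψ ⟨RedModP.mk R p w, hw⟩ = ⟨RedModP.mk S p w', hw'⟩ →
        ψ ⟨RedModP.mk R p u, hu⟩ = ⟨RedModP.mk S p u', hu'⟩ := by
  classical
  obtain ⟨n, f, hf⟩ := Module.Finite.exists_fin' R P
  obtain ⟨g, hfg⟩ := Module.projective_lifting_property f LinearMap.id hf
  obtain ⟨m, F, hF⟩ := hgen
  obtain ⟨G, hFG⟩ := Module.projective_lifting_property F LinearMap.id hF
  have tfR : Function.Injective (fun x : R => p • x) := flat_nsmul_inj R hp.ne_zero
  have tfS : Function.Injective (fun x : S => p • x) := flat_nsmul_inj S hp.ne_zero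
  -- the maps on raw elements
  set Tmap : R → S := fun z => (iso (sigma f g z)).unop with hTmap
  set Umap : S → R := fun s => theta F G (iso.symm (MulOpposite.op s)) with hUmap
  -- lifts
  choose lR hlR using (RingQuot.mkRingHom_surjective _ :
    ∀ x : RedModP R p, ∃ z : R, RedModP.mk R p z = x)
  choose lS hlS using (RingQuot.mkRingHom_surjective _ :
    ∀ x : RedModP S p, ∃ s : S, RedModP.mk S p s = x)
  have hlR' : ∀ x : RedModP R p, RedModP.mk R p (lR x) = x := fun x => hlR x
  have hlS' : ∀ x : RedModP S p, RedModP.mk S p (lS x) = x := fun x => hlS x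
  -- centrality transfer R → S
  have hcentT : ∀ z : R, (∀ r, ∃ c, z * r - r * z = (p : R) * c) →
      ∀ s₂ : S, ∃ c, Tmap z * s₂ - s₂ * Tmap z = (p : S) * c := by
    intro z hz s₂
    obtain ⟨c, hc⟩ := sigma_central f g hfg tfR hz (iso.symm (MulOpposite.op s₂))
    refine ⟨(iso (-c)).unop, ?_⟩
    have e1 : Tmap z * s₂ =
        (iso (iso.symm (MulOpposite.op s₂) * sigma f g z)).unop := by
      rw [map_mul, RingEquiv.apply_symm_apply, MulOpposite.unop_mul, MulOpposite.unop_op]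
    have e2 : s₂ * Tmap z =
        (iso (sigma f g z * iso.symm (MulOpposite.op s₂))).unop := by
      rw [map_mul, RingEquiv.apply_symm_apply, MulOpposite.unop_mul, MulOpposite.unop_op]
    have e3 : iso.symm (MulOpposite.op s₂) * sigma f g z -
        sigma f g z * iso.symm (MulOpposite.op s₂) = p • (-c) := by
      rw [smul_neg, ← hc]; abel
    rw [e1, e2, ← MulOpposite.unop_sub, ← map_sub, e3, map_nsmul, MulOpposite.unop_smul,
      nsmul_eq_mul]
  -- centrality transfer S → End P
  have hcentU : ∀ s : S, (∀ s₂, ∃ c, s * s₂ - s₂ * s = (p : S) * c) →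
      ∀ b : Module.End R P, ∃ c : Module.End R P,
        iso.symm (MulOpposite.op s) * b - b * iso.symm (MulOpposite.op s) = p • c := by
    intro s hs b
    obtain ⟨c, hc⟩ := hs ((iso b).unop)
    refine ⟨iso.symm (MulOpposite.op (-c)), ?_⟩
    have e1 : iso.symm (MulOpposite.op s) * b =
        iso.symm (MulOpposite.op ((iso b).unop * s)) := by
      rw [← RingEquiv.symm_apply_apply iso b, ← map_mul]
      rw [RingEquiv.apply_symm_apply]
      rw [← MulOpposite.op_unop (iso b), ← MulOpposite.op_mul]
      rw [MulOpposite.unop_op]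
    have e2 : b * iso.symm (MulOpposite.op s) =
        iso.symm (MulOpposite.op (s * (iso b).unop)) := by
      rw [← RingEquiv.symm_apply_apply iso b, ← map_mul]
      rw [RingEquiv.apply_symm_apply]
      rw [← MulOpposite.op_unop (iso b), ← MulOpposite.op_mul]
      rw [MulOpposite.unop_op]
    have e3 : (iso b).unop * s - s * (iso b).unop = p • (-c) := by
      rw [smul_neg, nsmul_eq_mul, ← hc]; abel
    rw [e1, e2, ← map_sub, ← MulOpposite.op_sub, e3, MulOpposite.op_smul, map_nsmul]
  -- congruences
  have hTcong : ∀ z z₂ : R, RedModP.mk R p z = RedModP.mk R p z₂ →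
      RedModP.mk S p (Tmap z) = RedModP.mk S p (Tmap z₂) := by
    intro z z₂ h
    obtain ⟨c, hc⟩ := (redMk_eq_iff _ _).1 h
    refine redMk_eq_of_nsmul (c := (iso (sigma f g c)).unop) ?_
    show (iso (sigma f g z)).unop = (iso (sigma f g z₂)).unop + p • (iso (sigma f g c)).unop
    rw [hc, sigma_add, sigma_pmul, map_add, map_nsmul, MulOpposite.unop_add,
      MulOpposite.unop_smul]
  have hUcong : ∀ s s₂ : S, RedModP.mk S p s = RedModP.mk S p s₂ →
      RedModP.mk R p (Umap s) = RedModP.mk R p (Umap s₂) := by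
    intro s s₂ h
    obtain ⟨c, hc⟩ := (redMk_eq_iff _ _).1 h
    refine redMk_eq_of_nsmul (c := theta F G (iso.symm (MulOpposite.op c))) ?_
    show theta F G (iso.symm (MulOpposite.op s)) =
      theta F G (iso.symm (MulOpposite.op s₂)) + p • theta F G (iso.symm (MulOpposite.op c))
    have hop : MulOpposite.op s = MulOpposite.op s₂ + p • MulOpposite.op c := by
      rw [hc, ← nsmul_eq_mul, MulOpposite.op_add, MulOpposite.op_smul]
    rw [hop, map_add, map_nsmul, theta_add, theta_psmul, nsmul_eq_mul]
  -- membership in centers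
  have hmemT : ∀ z : R, RedModP.mk R p z ∈ Subring.center (RedModP R p) →
      RedModP.mk S p (Tmap z) ∈ Subring.center (RedModP S p) := fun z hz =>
    (mem_center_iff' _).2 (hcentT z ((mem_center_iff' _).1 hz))
  have hmemU : ∀ s : S, RedModP.mk S p s ∈ Subring.center (RedModP S p) →
      RedModP.mk R p (Umap s) ∈ Subring.center (RedModP R p) := fun s hs =>
    (mem_center_iff' _).2 (theta_central F G hFG (hcentU s ((mem_center_iff' _).1 hs)))
  -- multiplicativity mod p of Tmap
  have hTmul : ∀ z w : R, (∀ r, ∃ c, z * r - r * z = (p : R) * c) →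
      (∀ r, ∃ c, w * r - r * w = (p : R) * c) →
      RedModP.mk S p (Tmap (z * w)) = RedModP.mk S p (Tmap w * Tmap z) := by
    intro z w hz hw
    obtain ⟨c, hcc⟩ := sigma_comp f g hfg tfR hz hw
    obtain ⟨u₀, hu₀⟩ := hz w
    have h1 : sigma f g (z * w) = sigma f g z * sigma f g w + p • sigma f g u₀
        - (p * p) • c := by
      have h2 : z * w = w * z + (p : R) * u₀ := by rw [← hu₀]; noncomm_ring
      rw [h2, sigma_add, sigma_pmul, hcc]
      abel
    refine redMk_eq_of_nsmul
      (c := (iso (sigma f g u₀)).unop - p • (iso c).unop) ?_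
    show (iso (sigma f g (z * w))).unop = Tmap w * Tmap z
      + p • ((iso (sigma f g u₀)).unop - p • (iso c).unop)
    rw [h1, map_sub, map_add, map_mul, map_nsmul, map_nsmul]
    rw [MulOpposite.unop_sub, MulOpposite.unop_add, MulOpposite.unop_mul,
      MulOpposite.unop_smul, MulOpposite.unop_smul]
    rw [smul_sub, mul_smul]
    abel
  -- additivity of Tmap
  have hTadd : ∀ z w : R, Tmap (z + w) = Tmap z + Tmap w := by
    intro z w
    show (iso (sigma f g (z + w))).unop = (iso (sigma f g z)).unop + (iso (sigma f g w)).unop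
    rw [sigma_add, map_add, MulOpposite.unop_add]
  -- key computations for inverses
  have hUT : ∀ z : R, (∀ r, ∃ c, z * r - r * z = (p : R) * c) →
      RedModP.mk R p (Umap (Tmap z)) = RedModP.mk R p z := by
    intro z hz
    obtain ⟨c, hc⟩ := theta_sigma f g F G hfg hFG hz
    have h1 : Umap (Tmap z) = theta F G (sigma f g z) := by
      show theta F G (iso.symm (MulOpposite.op ((iso (sigma f g z)).unop))) = _
      rw [MulOpposite.op_unop, RingEquiv.symm_apply_apply]
    rw [h1, hc, ← nsmul_eq_mul]
    exact redMk_eq_of_nsmul rfl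
  have hTU : ∀ s : S, (∀ s₂, ∃ c, s * s₂ - s₂ * s = (p : S) * c) →
      RedModP.mk S p (Tmap (Umap s)) = RedModP.mk S p s := by
    intro s hs
    obtain ⟨c, hc⟩ := sigma_theta f g F G hfg hFG tfR (hcentU s hs)
    have h1 : Tmap (Umap s) = s + p • (iso c).unop := by
      show (iso (sigma f g (theta F G (iso.symm (MulOpposite.op s))))).unop = _
      rw [hc, map_add, map_nsmul, RingEquiv.apply_symm_apply, MulOpposite.unop_add,
        MulOpposite.unop_smul, MulOpposite.unop_op]
    rw [h1]
    exact redMk_eq_of_nsmul rfl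
  -- helper to extract centrality of lifts
  have hcen_lift : ∀ x : Subring.center (RedModP R p),
      ∀ r, ∃ c, lR x.val * r - r * lR x.val = (p : R) * c := by
    intro x
    refine (mem_center_iff' _).1 ?_
    rw [hlR']
    exact x.2
  have hcen_liftS : ∀ y : Subring.center (RedModP S p),
      ∀ s₂, ∃ c, lS y.val * s₂ - s₂ * lS y.val = (p : S) * c := by
    intro y
    refine (mem_center_iff' _).1 ?_
    rw [hlS']
    exact y.2
  -- the equivalence
  refine ⟨{
    toFun := fun x => ⟨RedModP.mk S p (Tmap (lR x.val)),
      hmemT _ (by rw [hlR']; exact x.2)⟩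
    invFun := fun y => ⟨RedModP.mk R p (Umap (lS y.val)),
      hmemU _ (by rw [hlS']; exact y.2)⟩
    left_inv := ?_
    right_inv := ?_
    map_mul' := ?_
    map_add' := ?_ }, ?_⟩
  · -- left_inv
    intro x
    apply Subtype.ext
    show RedModP.mk R p (Umap (lS (RedModP.mk S p (Tmap (lR x.val))))) = x.val
    rw [hUcong _ _ (hlS' (RedModP.mk S p (Tmap (lR x.val)))),
      hUT _ (hcen_lift x), hlR']
  · -- right_inv
    intro y
    apply Subtype.ext
    show RedModP.mk S p (Tmap (lR (RedModP.mk R p (Umap (lS y.val))))) = y.val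
    rw [hTcong _ _ (hlR' (RedModP.mk R p (Umap (lS y.val)))),
      hTU _ (hcen_liftS y), hlS']
  · -- map_mul'
    intro x y
    apply Subtype.ext
    show RedModP.mk S p (Tmap (lR (x * y).val)) =
      RedModP.mk S p (Tmap (lR x.val)) * RedModP.mk S p (Tmap (lR y.val))
    have h1 : RedModP.mk R p (lR (x * y).val) = RedModP.mk R p (lR x.val * lR y.val) := by
      rw [hlR', map_mul, hlR', hlR']
      rfl
    rw [hTcong _ _ h1, hTmul _ _ (hcen_lift x) (hcen_lift y), map_mul]
    have hwc : RedModP.mk S p (Tmap (lR y.val)) ∈ Subring.center (RedModP S p) :=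
      hmemT _ (by rw [hlR']; exact y.2)
    exact (Subring.mem_center_iff.1 hwc _).symm
  · -- map_add'
    intro x y
    apply Subtype.ext
    show RedModP.mk S p (Tmap (lR (x + y).val)) =
      RedModP.mk S p (Tmap (lR x.val)) + RedModP.mk S p (Tmap (lR y.val))
    have h1 : RedModP.mk R p (lR (x + y).val) = RedModP.mk R p (lR x.val + lR y.val) := by
      rw [hlR', map_add, hlR', hlR']
      rfl
    rw [hTcong _ _ h1, hTadd, map_add]
  · -- the Poisson property
    intro z w u z' w' u' hz hw hu hz' hw' hu' hzw h'zw ez ew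
    have hzc := (mem_center_iff' z).1 hz
    have hwc := (mem_center_iff' w).1 hw
    -- extract the value equalities
    have hmkz : RedModP.mk S p (Tmap z) = RedModP.mk S p z' := by
      have h0 := congrArg Subtype.val ez
      exact Eq.trans (hTcong _ _ (hlR' (RedModP.mk R p z))).symm h0
    have hmkw : RedModP.mk S p (Tmap w) = RedModP.mk S p w' := by
      have h0 := congrArg Subtype.val ew
      exact Eq.trans (hTcong _ _ (hlR' (RedModP.mk R p w))).symm h0
    apply Subtype.ext
    show RedModP.mk S p (Tmap (lR (RedModP.mk R p u))) = RedModP.mk S p u'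
    rw [hTcong _ _ (hlR' (RedModP.mk R p u))]
    -- the bracket identity in End P
    obtain ⟨c₁, hc₁⟩ := sigma_comp f g hfg tfR hzc hwc
    obtain ⟨c₂, hc₂⟩ := sigma_comp f g hfg tfR hwc hzc
    have hsig : sigma f g w * sigma f g z - sigma f g z * sigma f g w =
        p • sigma f g u + (p * p) • (c₂ - c₁) := by
      have h2 : z * w = w * z + (p : R) * u := by rw [← hzw]; noncomm_ring
      rw [hc₁, hc₂, h2, sigma_add, sigma_pmul, smul_sub]
      abel
    -- transfer to S
    set A := Tmap z with hA
    set B := Tmap w with hB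
    have hbrS : A * B - B * A = p • Tmap u
        + (p * p) • ((iso c₂).unop - (iso c₁).unop) := by
      have h6 := congrArg (fun X => (iso X).unop) hsig
      simp only [map_sub, map_add, map_mul, map_nsmul, MulOpposite.unop_sub,
        MulOpposite.unop_add, MulOpposite.unop_mul, MulOpposite.unop_smul] at h6
      exact h6
    -- lifts of z', w'
    obtain ⟨α, hα0⟩ := (redMk_eq_iff z' A).1 hmkz.symm
    obtain ⟨β, hβ0⟩ := (redMk_eq_iff w' B).1 hmkw.symm
    have hα : z' = A + p • α := by rw [hα0, nsmul_eq_mul]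
    have hβ : w' = B + p • β := by rw [hβ0, nsmul_eq_mul]
    -- centrality of A, B mod p in S
    obtain ⟨γ₁, hγ₁0⟩ := hcentT z hzc β
    obtain ⟨γ₂, hγ₂0⟩ := hcentT w hwc α
    have hγ₁ : A * β - β * A = p • γ₁ := by rw [hγ₁0, nsmul_eq_mul]
    have hγ₂ : B * α - α * B = p • γ₂ := by rw [hγ₂0, nsmul_eq_mul]
    -- expansion
    have expand : z' * w' - w' * z' = (A * B - B * A) +
        p • ((A * β - β * A) - (B * α - α * B)) + (p * p) • (α * β - β * α) := by
      rw [hα, hβ]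
      simp only [mul_add, add_mul, smul_mul_assoc, mul_smul_comm, smul_smul, smul_sub,
        smul_add]
      abel
    have hple : p • u' = p • (Tmap u + p • ((iso c₂).unop - (iso c₁).unop) + (p • γ₁ - p • γ₂)
        + p • (α * β - β * α)) := by
      calc p • u' = z' * w' - w' * z' := by rw [nsmul_eq_mul, h'zw]
        _ = (A * B - B * A) + p • ((A * β - β * A) - (B * α - α * B))
            + (p * p) • (α * β - β * α) := expand
        _ = p • Tmap u + (p * p) • ((iso c₂).unop - (iso c₁).unop) + p • (p • γ₁ - p • γ₂)
            + (p * p) • (α * β - β * α) := by rw [hbrS, hγ₁, hγ₂]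
        _ = _ := by rw [mul_smul, mul_smul, ← smul_add, ← smul_add, ← smul_add]
    have hcancel : u' = Tmap u + p • ((iso c₂).unop - (iso c₁).unop) + (p • γ₁ - p • γ₂)
        + p • (α * β - β * α) := tfS hple
    have hform : u' = Tmap u + p • (((iso c₂).unop - (iso c₁).unop) + γ₁ - γ₂ + (α * β - β * α)) := by
      rw [hcancel]
      simp only [smul_add, smul_sub]
      abel
    exact (redMk_eq_of_nsmul hform).symm
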